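/- arXiv:2603.14868 — 2 statements merged into one kernel-verified Lean document; each statement's English description precedes it below -/
import Mathlib

section
/- One-step covariance propagation under affine feedback (equation (18b) of the paper): Let (Ω, F, P) be a probability space, x : Ω → ℝⁿ and Δw : Ω → ℝ^d square-integrable random vectors such that Δw is independent of x, E[Δw] = 0, and E[Δw Δwᵀ] = Δτ I_d for some Δτ > 0. Let x̄ = E[x] and Σ = Cov(x). Given a deterministic vector ṽ ∈ ℝ^{m+1}, a matrix K̃ ∈ ℝ^{(m+1)×n}, matrices A ∈ ℝ^{n×n}, F ∈ ℝ^{n×(m+1)}, vector d ∈ ℝⁿ, and, for each i = 1, …, d, matrices Ã⁽ⁱ⁾ ∈ ℝ^{n×n}, F̃⁽ⁱ⁾ ∈ ℝ^{n×(m+1)}, vectors d̃⁽ⁱ⁾ ∈ ℝⁿ, set ũ := ṽ + K̃(x − x̄) and x₊ := A x + F ũ + d + Σ_{i=1}^{d} (Ã⁽ⁱ⁾ x + F̃⁽ⁱ⁾ ũ + d̃⁽ⁱ⁾) Δw⁽ⁱ⁾. Then Cov(x₊) = (A + F K̃) Σ (A + F K̃)ᵀ + Δτ · Σ_{i=1}^{d}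 ( (Ã⁽ⁱ⁾ + F̃⁽ⁱ⁾ K̃) Σ (Ã⁽ⁱ⁾ + F̃⁽ⁱ⁾ K̃)ᵀ + q⁽ⁱ⁾ (q⁽ⁱ⁾)ᵀ ), where q⁽ⁱ⁾ := Ã⁽ⁱ⁾ x̄ + F̃⁽ⁱ⁾ ṽ + d̃⁽ⁱ⁾. -/
open MeasureTheory Matrix

/-- Componentwise expectation of a random vector. -/
noncomputable def meanVec {Ω : Type*} [MeasurableSpace Ω] (P : Measure Ω) {p : ℕ}
    (z : Ω → Fin p → ℝ) : Fin p → ℝ :=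
  fun i => ∫ ω, z ω i ∂P

/-- (Cross-)covariance matrix `E[(y − E y)(z − E z)ᵀ]` of two random vectors. -/
noncomputable def covMat {Ω : Type*} [MeasurableSpace Ω] (P : Measure Ω) {p q : ℕ}
    (y : Ω → Fin p → ℝ) (z : Ω → Fin q → ℝ) : Matrix (Fin p) (Fin q) ℝ :=
  Matrix.of fun i j => ∫ ω, (y ω i - meanVec P y i) * (z ω j - meanVec P z j) ∂P


section Helpers

open MeasureTheory Matrix ProbabilityTheory

variable {Ω : Type*} [MeasurableSpace Ω] {P : Measure Ω} [IsProbabilityMeasure P]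

set_option linter.unusedSectionVars false

private lemma l2mul_integrable {f g : Ω → ℝ} (hf : MemLp f 2 P) (hg : MemLp g 2 P) :
    Integrable (fun ω => f ω * g ω) P := by
  have h : MemLp (g • f) 1 P :=
    hf.smul hg (p := 2) (q := 2) (r := 1)
  have := h.integrable le_rfl
  simpa [smul_eq_mul, mul_comm, Pi.mul_def] using this

private lemma memℒp_component {p : ℕ} {x : Ω → Fin p → ℝ} (hx : MemLp x 2 P) (i : Fin p) :
    MemLp (fun ω => x ω i) 2 P := by
  have hm : AEStronglyMeasurable (fun ω => x ω i) P :=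
    (continuous_apply i).comp_aestronglyMeasurable hx.1
  exact hx.of_le hm (Filter.Eventually.of_forall fun ω => by
    simpa using norm_le_pi_norm (x ω) i)

private lemma indep_key {n d : ℕ} {x : Ω → Fin n → ℝ} {Δw : Ω → Fin d → ℝ}
    (hx : MemLp x 2 P) (hw : MemLp Δw 2 P) (hindep : IndepFun Δw x P)
    (φ : (Fin d → ℝ) → ℝ) (ψ : (Fin n → ℝ) → ℝ) (hφ : Measurable φ) (hψ : Measurable ψ) :
    ∫ ω, φ (Δw ω) * ψ (x ω) ∂P = (∫ ω, φ (Δw ω) ∂P) * ∫ ω, ψ (x ω) ∂P := by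
  have hI : IndepFun (φ ∘ Δw) (ψ ∘ x) P := hindep.comp hφ hψ
  have h1 : AEStronglyMeasurable (φ ∘ Δw) P :=
    (hφ.comp_aemeasurable hw.1.aemeasurable).aestronglyMeasurable
  have h2 : AEStronglyMeasurable (ψ ∘ x) P :=
    (hψ.comp_aemeasurable hx.1.aemeasurable).aestronglyMeasurable
  exact hI.integral_mul_eq_mul_integral h1 h2

private lemma indep_key_int {n d : ℕ} {x : Ω → Fin n → ℝ} {Δw : Ω → Fin d → ℝ}
    (hindep : IndepFun Δw x P)
    (φ : (Fin d → ℝ) → ℝ) (ψ : (Fin n → ℝ) → ℝ) (hφ : Measurable φ) (hψ : Measurable ψ)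
    (h1 : Integrable (fun ω => φ (Δw ω)) P) (h2 : Integrable (fun ω => ψ (x ω)) P) :
    Integrable (fun ω => φ (Δw ω) * ψ (x ω)) P :=
  (hindep.comp hφ hψ).integrable_mul h1 h2

private lemma affine_meas {n : ℕ} (xb : Fin n → ℝ) (r : ℝ) (C : Fin n → ℝ) :
    Measurable (fun z : Fin n → ℝ => r + ∑ e, C e * (z e - xb e)) :=
  (Finset.measurable_sum _ fun e _ =>
    ((measurable_pi_apply e).sub measurable_const).const_mul _).const_add r

private lemma sum_meas {n : ℕ} (xb : Fin n → ℝ) (C : Fin n → ℝ) :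
    Measurable (fun z : Fin n → ℝ => ∑ e, C e * (z e - xb e)) :=
  Finset.measurable_sum _ fun e _ =>
    ((measurable_pi_apply e).sub measurable_const).const_mul _

private lemma affine_step {n m : ℕ} (B : Matrix (Fin n) (Fin n) ℝ)
    (G : Matrix (Fin n) (Fin (m+1)) ℝ)
    (dd : Fin n → ℝ) (v : Fin (m+1) → ℝ) (K : Matrix (Fin (m+1)) (Fin n) ℝ)
    (z xb : Fin n → ℝ) :
    B.mulVec z + G.mulVec (v + K.mulVec (z - xb)) + dd
      = (B.mulVec xb + G.mulVec v + dd) + (B + G * K).mulVec (z - xb) := by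
  have h : B.mulVec z = B.mulVec xb + B.mulVec (z - xb) := by
    rw [← Matrix.mulVec_add, add_sub_cancel]
  rw [h, Matrix.mulVec_add, Matrix.add_mulVec, ← Matrix.mulVec_mulVec]
  abel

set_option maxHeartbeats 1000000

private lemma core {n d : ℕ} (x : Ω → Fin n → ℝ) (Δw : Ω → Fin d → ℝ)
    (hx : MemLp x 2 P) (hw : MemLp Δw 2 P) (hindep : IndepFun Δw x P)
    (hw0 : ∀ i, ∫ ω, Δw ω i ∂P = 0) (Δτ : ℝ)
    (hw2 : ∀ i j, ∫ ω, Δw ω i * Δw ω j ∂P = if i = j then Δτ else 0)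
    (xb : Fin n → ℝ) (hxb : ∀ a, (∫ ω, x ω a ∂P) = xb a)
    (M : Matrix (Fin n) (Fin n) ℝ) (c : Fin n → ℝ)
    (Mi : Fin d → Matrix (Fin n) (Fin n) ℝ) (q : Fin d → Fin n → ℝ)
    (xp : Ω → Fin n → ℝ)
    (hxp : ∀ ω a, xp ω a = (c a + ∑ e, M a e * (x ω e - xb e)) +
        ∑ i, Δw ω i * (q i a + ∑ e, Mi i a e * (x ω e - xb e))) :
    covMat P xp xp = M * covMat P x x * Mᵀ +
      Δτ • ∑ i, (Mi i * covMat P x x * (Mi i)ᵀ + vecMulVec (q i) (q i)) := by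
  -- basic L² facts
  have hxa : ∀ a, MemLp (fun ω => x ω a) 2 P := memℒp_component hx
  have hwa : ∀ i, MemLp (fun ω => Δw ω i) 2 P := memℒp_component hw
  have hya : ∀ a, MemLp (fun ω => x ω a - xb a) 2 P := fun a => (hxa a).sub (memLp_const _)
  have hyint : ∀ a, Integrable (fun ω => x ω a - xb a) P := fun a => (hya a).integrable one_le_two
  have hwint : ∀ i, Integrable (fun ω => Δw ω i) P := fun i => (hwa i).integrable one_le_two
  have hy0 : ∀ a, ∫ ω, (x ω a - xb a) ∂P = 0 := by
    intro a
    rw [integral_sub ((hxa a).integrable one_le_two) (integrable_const _), integral_const]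
    simp [hxb a]
  have hcovxx : ∀ e f, ∫ ω, (x ω e - xb e) * (x ω f - xb f) ∂P = covMat P x x e f := by
    intro e f
    simp only [covMat, Matrix.of_apply]
    rw [show meanVec P x e = xb e from hxb e, show meanVec P x f = xb f from hxb f]
  -- linear statistics
  have hSmem : ∀ C : Fin n → ℝ, MemLp (fun ω => ∑ e, C e * (x ω e - xb e)) 2 P := fun C =>
    memLp_finset_sum Finset.univ (fun e _ => (hya e).const_mul _)
  have hSint : ∀ C : Fin n → ℝ, Integrable (fun ω => ∑ e, C e * (x ω e - xb e)) P :=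
    fun C => (hSmem C).integrable one_le_two
  have hS0 : ∀ C : Fin n → ℝ, ∫ ω, (∑ e, C e * (x ω e - xb e)) ∂P = 0 := by
    intro C
    rw [integral_finset_sum _ (fun e _ => (hyint e).const_mul _)]
    simp_rw [integral_const_mul]
    simp [hy0]
  have hAmem : ∀ (r : ℝ) (C : Fin n → ℝ),
      MemLp (fun ω => r + ∑ e, C e * (x ω e - xb e)) 2 P :=
    fun r C => (memLp_const r).add (hSmem C)
  have hAint : ∀ (r : ℝ) (C : Fin n → ℝ),
      Integrable (fun ω => r + ∑ e, C e * (x ω e - xb e)) P :=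
    fun r C => (hAmem r C).integrable one_le_two
  have hA0 : ∀ (r : ℝ) (C : Fin n → ℝ),
      ∫ ω, (r + ∑ e, C e * (x ω e - xb e)) ∂P = r := by
    intro r C
    rw [integral_add (integrable_const r) (hSint C), integral_const, hS0]
    simp
  have hSS : ∀ C D : Fin n → ℝ,
      ∫ ω, (∑ e, C e * (x ω e - xb e)) * (∑ f, D f * (x ω f - xb f)) ∂P
        = ∑ e, ∑ f, C e * D f * covMat P x x e f := by
    intro C D
    have hrw : ∀ ω, (∑ e, C e * (x ω e - xb e)) * (∑ f, D f * (x ω f - xb f))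
        = ∑ e, ∑ f, (C e * D f) * ((x ω e - xb e) * (x ω f - xb f)) := by
      intro ω
      rw [Finset.sum_mul_sum]
      exact Finset.sum_congr rfl fun e _ => Finset.sum_congr rfl fun f _ => by ring
    simp_rw [hrw]
    rw [integral_finset_sum _ (fun e _ => integrable_finset_sum _
      (fun f _ => (l2mul_integrable (hya e) (hya f)).const_mul _))]
    refine Finset.sum_congr rfl fun e _ => ?_
    rw [integral_finset_sum _ (fun f _ => (l2mul_integrable (hya e) (hya f)).const_mul _)]
    refine Finset.sum_congr rfl fun f _ => ?_
    rw [integral_const_mul, hcovxx]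
  have hAA : ∀ (r : ℝ) (C : Fin n → ℝ) (s : ℝ) (D : Fin n → ℝ),
      ∫ ω, (r + ∑ e, C e * (x ω e - xb e)) * (s + ∑ f, D f * (x ω f - xb f)) ∂P
        = r * s + ∑ e, ∑ f, C e * D f * covMat P x x e f := by
    intro r C s D
    have hrw : ∀ ω, (r + ∑ e, C e * (x ω e - xb e)) * (s + ∑ f, D f * (x ω f - xb f))
        = r * s + (s * ∑ e, C e * (x ω e - xb e)) + ((r * ∑ f, D f * (x ω f - xb f))
          + (∑ e, C e * (x ω e - xb e)) * (∑ f, D f * (x ω f - xb f))) := by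
      intro ω; ring
    simp_rw [hrw]
    have I1 : Integrable (fun ω => r * s + s * ∑ e, C e * (x ω e - xb e)) P := by
      exact (integrable_const _).add ((hSint C).const_mul s)
    have I2 : Integrable (fun ω => r * ∑ f, D f * (x ω f - xb f)) P := by
      exact (hSint D).const_mul r
    have I3 : Integrable (fun ω =>
        (∑ e, C e * (x ω e - xb e)) * ∑ f, D f * (x ω f - xb f)) P := by
      exact l2mul_integrable (hSmem C) (hSmem D)
    have I0 : Integrable (fun ω : Ω => r * s) P := integrable_const _
    have I4 : Integrable (fun ω => s * ∑ e, C e * (x ω e - xb e)) P := by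
      exact (hSint C).const_mul s
    have I23 : Integrable (fun ω => r * (∑ f, D f * (x ω f - xb f)) +
        (∑ e, C e * (x ω e - xb e)) * ∑ f, D f * (x ω f - xb f)) P := by
      exact I2.add I3
    rw [integral_add I1 I23, integral_add I0 I4, integral_add I2 I3,
        integral_const, integral_const_mul, integral_const_mul, hS0, hS0, hSS]
    simp
  -- mixed moments
  have K1 : ∀ (i : Fin d) (r : ℝ) (C : Fin n → ℝ),
      ∫ ω, Δw ω i * (r + ∑ e, C e * (x ω e - xb e)) ∂P = 0 := by
    intro i r C
    have h : ∫ ω, Δw ω i * (r + ∑ e, C e * (x ω e - xb e)) ∂P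
        = (∫ ω, Δw ω i ∂P) * ∫ ω, (r + ∑ e, C e * (x ω e - xb e)) ∂P :=
      indep_key hx hw hindep (fun w => w i) (fun z => r + ∑ e, C e * (z e - xb e))
        (measurable_pi_apply i) (affine_meas xb r C)
    rw [h, hw0 i, zero_mul]
  have J1 : ∀ (i : Fin d) (r : ℝ) (C : Fin n → ℝ),
      Integrable (fun ω => Δw ω i * (r + ∑ e, C e * (x ω e - xb e))) P := by
    intro i r C
    exact indep_key_int hindep (fun w => w i) (fun z => r + ∑ e, C e * (z e - xb e))
      (measurable_pi_apply i) (affine_meas xb r C) (hwint i) (hAint r C)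
  have K2 : ∀ (j : Fin d) (C : Fin n → ℝ) (s : ℝ) (D : Fin n → ℝ),
      ∫ ω, Δw ω j * ((∑ e, C e * (x ω e - xb e)) * (s + ∑ f, D f * (x ω f - xb f))) ∂P
        = 0 := by
    intro j C s D
    have h : ∫ ω, Δw ω j * ((∑ e, C e * (x ω e - xb e)) * (s + ∑ f, D f * (x ω f - xb f))) ∂P
        = (∫ ω, Δw ω j ∂P) *
          ∫ ω, (∑ e, C e * (x ω e - xb e)) * (s + ∑ f, D f * (x ω f - xb f)) ∂P :=
      indep_key hx hw hindep (fun w => w j)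
        (fun z => (∑ e, C e * (z e - xb e)) * (s + ∑ f, D f * (z f - xb f)))
        (measurable_pi_apply j) ((sum_meas xb C).mul (affine_meas xb s D))
    rw [h, hw0 j, zero_mul]
  have J2 : ∀ (j : Fin d) (C : Fin n → ℝ) (s : ℝ) (D : Fin n → ℝ),
      Integrable (fun ω => Δw ω j *
        ((∑ e, C e * (x ω e - xb e)) * (s + ∑ f, D f * (x ω f - xb f)))) P := by
    intro j C s D
    exact indep_key_int hindep (fun w => w j)
      (fun z => (∑ e, C e * (z e - xb e)) * (s + ∑ f, D f * (z f - xb f)))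
      (measurable_pi_apply j) ((sum_meas xb C).mul (affine_meas xb s D))
      (hwint j) (l2mul_integrable (hSmem C) (hAmem s D))
  have K2' : ∀ (j : Fin d) (s : ℝ) (D : Fin n → ℝ) (C : Fin n → ℝ),
      ∫ ω, Δw ω j * ((s + ∑ f, D f * (x ω f - xb f)) * (∑ e, C e * (x ω e - xb e))) ∂P
        = 0 := by
    intro j s D C
    have h : ∫ ω, Δw ω j * ((s + ∑ f, D f * (x ω f - xb f)) * (∑ e, C e * (x ω e - xb e))) ∂P
        = (∫ ω, Δw ω j ∂P) *
          ∫ ω, (s + ∑ f, D f * (x ω f - xb f)) * (∑ e, C e * (x ω e - xb e)) ∂P :=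
      indep_key hx hw hindep (fun w => w j)
        (fun z => (s + ∑ f, D f * (z f - xb f)) * (∑ e, C e * (z e - xb e)))
        (measurable_pi_apply j) ((affine_meas xb s D).mul (sum_meas xb C))
    rw [h, hw0 j, zero_mul]
  have J2' : ∀ (j : Fin d) (s : ℝ) (D : Fin n → ℝ) (C : Fin n → ℝ),
      Integrable (fun ω => Δw ω j *
        ((s + ∑ f, D f * (x ω f - xb f)) * (∑ e, C e * (x ω e - xb e)))) P := by
    intro j s D C
    exact indep_key_int hindep (fun w => w j)
      (fun z => (s + ∑ f, D f * (z f - xb f)) * (∑ e, C e * (z e - xb e)))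
      (measurable_pi_apply j) ((affine_meas xb s D).mul (sum_meas xb C))
      (hwint j) (l2mul_integrable (hAmem s D) (hSmem C))
  have K4 : ∀ (i j : Fin d) (r : ℝ) (C : Fin n → ℝ) (s : ℝ) (D : Fin n → ℝ),
      ∫ ω, (Δw ω i * Δw ω j) *
          ((r + ∑ e, C e * (x ω e - xb e)) * (s + ∑ f, D f * (x ω f - xb f))) ∂P
        = (if i = j then Δτ else 0) *
            (r * s + ∑ e, ∑ f, C e * D f * covMat P x x e f) := by
    intro i j r C s D
    have h : ∫ ω, (Δw ω i * Δw ω j) *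
          ((r + ∑ e, C e * (x ω e - xb e)) * (s + ∑ f, D f * (x ω f - xb f))) ∂P
        = (∫ ω, Δw ω i * Δw ω j ∂P) *
          ∫ ω, (r + ∑ e, C e * (x ω e - xb e)) * (s + ∑ f, D f * (x ω f - xb f)) ∂P :=
      indep_key hx hw hindep (fun w => w i * w j)
        (fun z => (r + ∑ e, C e * (z e - xb e)) * (s + ∑ f, D f * (z f - xb f)))
        ((measurable_pi_apply i).mul (measurable_pi_apply j))
        ((affine_meas xb r C).mul (affine_meas xb s D))
    rw [h, hw2 i j, hAA]
  have J4 : ∀ (i j : Fin d) (r : ℝ) (C : Fin n → ℝ) (s : ℝ) (D : Fin n → ℝ),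
      Integrable (fun ω => (Δw ω i * Δw ω j) *
        ((r + ∑ e, C e * (x ω e - xb e)) * (s + ∑ f, D f * (x ω f - xb f)))) P := by
    intro i j r C s D
    exact indep_key_int hindep (fun w => w i * w j)
      (fun z => (r + ∑ e, C e * (z e - xb e)) * (s + ∑ f, D f * (z f - xb f)))
      ((measurable_pi_apply i).mul (measurable_pi_apply j))
      ((affine_meas xb r C).mul (affine_meas xb s D))
      (l2mul_integrable (hwa i) (hwa j)) (l2mul_integrable (hAmem r C) (hAmem s D))
  -- the mean of xp
  have hmean : ∀ a, meanVec P xp a = c a := by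
    intro a
    have h0 : meanVec P xp a = ∫ ω, xp ω a ∂P := rfl
    have h1 : (∫ ω, xp ω a ∂P) = ∫ ω, ((c a + ∑ e, M a e * (x ω e - xb e)) +
        ∑ i, Δw ω i * (q i a + ∑ e, Mi i a e * (x ω e - xb e))) ∂P :=
      integral_congr_ae (Filter.Eventually.of_forall fun ω => hxp ω a)
    rw [h0, h1, integral_add (hAint (c a) (M a))
        (integrable_finset_sum _ fun i _ => J1 i (q i a) (Mi i a)), hA0,
      integral_finset_sum _ (fun i _ => J1 i (q i a) (Mi i a))]
    simp only [K1, Finset.sum_const_zero, add_zero]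
  -- entrywise computation
  ext a b
  have hcent : ∀ ω (a : Fin n), xp ω a - c a = (∑ e, M a e * (x ω e - xb e)) +
      ∑ i, Δw ω i * (q i a + ∑ e, Mi i a e * (x ω e - xb e)) := by
    intro ω a; rw [hxp ω a]; ring
  have hInt : ∀ ω, (xp ω a - meanVec P xp a) * (xp ω b - meanVec P xp b)
      = (∑ e, M a e * (x ω e - xb e)) * (∑ e, M b e * (x ω e - xb e))
        + (∑ j, Δw ω j * ((∑ e, M a e * (x ω e - xb e)) *
            (q j b + ∑ f, Mi j b f * (x ω f - xb f))))
        + ((∑ i, Δw ω i * ((q i a + ∑ f, Mi i a f * (x ω f - xb f)) *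
            (∑ e, M b e * (x ω e - xb e))))
          + ∑ i, ∑ j, (Δw ω i * Δw ω j) *
              ((q i a + ∑ e, Mi i a e * (x ω e - xb e)) *
               (q j b + ∑ f, Mi j b f * (x ω f - xb f)))) := by
    intro ω
    rw [hmean a, hmean b, hcent ω a, hcent ω b]
    have e2 : (∑ e, M a e * (x ω e - xb e)) *
        (∑ j, Δw ω j * (q j b + ∑ f, Mi j b f * (x ω f - xb f)))
        = ∑ j, Δw ω j * ((∑ e, M a e * (x ω e - xb e)) *
            (q j b + ∑ f, Mi j b f * (x ω f - xb f))) := by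
      rw [Finset.mul_sum]; exact Finset.sum_congr rfl fun j _ => by ring
    have e3 : (∑ i, Δw ω i * (q i a + ∑ f, Mi i a f * (x ω f - xb f))) *
        (∑ e, M b e * (x ω e - xb e))
        = ∑ i, Δw ω i * ((q i a + ∑ f, Mi i a f * (x ω f - xb f)) *
            (∑ e, M b e * (x ω e - xb e))) := by
      rw [Finset.sum_mul]; exact Finset.sum_congr rfl fun i _ => by ring
    have e4 : (∑ i, Δw ω i * (q i a + ∑ e, Mi i a e * (x ω e - xb e))) *
        (∑ j, Δw ω j * (q j b + ∑ f, Mi j b f * (x ω f - xb f)))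
        = ∑ i, ∑ j, (Δw ω i * Δw ω j) *
            ((q i a + ∑ e, Mi i a e * (x ω e - xb e)) *
             (q j b + ∑ f, Mi j b f * (x ω f - xb f))) := by
      rw [Finset.sum_mul_sum]
      exact Finset.sum_congr rfl fun i _ => Finset.sum_congr rfl fun j _ => by ring
    rw [← e2, ← e3, ← e4]; ring
  have hLHS : covMat P xp xp a b
      = ∫ ω, ((∑ e, M a e * (x ω e - xb e)) * (∑ e, M b e * (x ω e - xb e))
        + (∑ j, Δw ω j * ((∑ e, M a e * (x ω e - xb e)) *
            (q j b + ∑ f, Mi j b f * (x ω f - xb f))))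
        + ((∑ i, Δw ω i * ((q i a + ∑ f, Mi i a f * (x ω f - xb f)) *
            (∑ e, M b e * (x ω e - xb e))))
          + ∑ i, ∑ j, (Δw ω i * Δw ω j) *
              ((q i a + ∑ e, Mi i a e * (x ω e - xb e)) *
               (q j b + ∑ f, Mi j b f * (x ω f - xb f))))) ∂P := by
    simp only [covMat, Matrix.of_apply]
    exact integral_congr_ae (Filter.Eventually.of_forall hInt)
  have IT1 : Integrable (fun ω =>
      (∑ e, M a e * (x ω e - xb e)) * (∑ e, M b e * (x ω e - xb e))) P := by
    exact l2mul_integrable (hSmem (M a)) (hSmem (M b))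
  have IT2 : Integrable (fun ω => ∑ j, Δw ω j * ((∑ e, M a e * (x ω e - xb e)) *
      (q j b + ∑ f, Mi j b f * (x ω f - xb f)))) P :=
    integrable_finset_sum _ fun j _ => J2 j (M a) (q j b) (Mi j b)
  have IT3 : Integrable (fun ω => ∑ i, Δw ω i * ((q i a + ∑ f, Mi i a f * (x ω f - xb f)) *
      (∑ e, M b e * (x ω e - xb e)))) P :=
    integrable_finset_sum _ fun i _ => J2' i (q i a) (Mi i a) (M b)
  have IT4 : Integrable (fun ω => ∑ i, ∑ j, (Δw ω i * Δw ω j) *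
      ((q i a + ∑ e, Mi i a e * (x ω e - xb e)) *
       (q j b + ∑ f, Mi j b f * (x ω f - xb f)))) P :=
    integrable_finset_sum _ fun i _ => integrable_finset_sum _ fun j _ =>
      J4 i j (q i a) (Mi i a) (q j b) (Mi j b)
  have I12 : Integrable (fun ω =>
      (∑ e, M a e * (x ω e - xb e)) * (∑ e, M b e * (x ω e - xb e))
        + ∑ j, Δw ω j * ((∑ e, M a e * (x ω e - xb e)) *
            (q j b + ∑ f, Mi j b f * (x ω f - xb f)))) P := by
    exact IT1.add IT2
  have I34 : Integrable (fun ω =>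
      (∑ i, Δw ω i * ((q i a + ∑ f, Mi i a f * (x ω f - xb f)) *
          (∑ e, M b e * (x ω e - xb e))))
        + ∑ i, ∑ j, (Δw ω i * Δw ω j) *
            ((q i a + ∑ e, Mi i a e * (x ω e - xb e)) *
             (q j b + ∑ f, Mi j b f * (x ω f - xb f)))) P := by
    exact IT3.add IT4
  rw [hLHS, integral_add I12 I34, integral_add IT1 IT2,
    integral_add IT3 IT4, hSS,
    integral_finset_sum _ (fun j _ => J2 j (M a) (q j b) (Mi j b)),
    integral_finset_sum _ (fun i _ => J2' i (q i a) (Mi i a) (M b)),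
    integral_finset_sum _ (fun i _ => integrable_finset_sum _ fun j _ =>
      J4 i j (q i a) (Mi i a) (q j b) (Mi j b))]
  simp only [K2, K2', Finset.sum_const_zero, add_zero, zero_add]
  have hval : ∀ i : Fin d, (∫ ω, ∑ j, (Δw ω i * Δw ω j) *
      ((q i a + ∑ e, Mi i a e * (x ω e - xb e)) *
       (q j b + ∑ f, Mi j b f * (x ω f - xb f))) ∂P)
      = Δτ * (q i a * q i b + ∑ e, ∑ f, Mi i a e * Mi i b f * covMat P x x e f) := by
    intro i
    rw [integral_finset_sum _ (fun j _ => J4 i j (q i a) (Mi i a) (q j b) (Mi j b))]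
    have : ∀ j, (∫ ω, (Δw ω i * Δw ω j) *
        ((q i a + ∑ e, Mi i a e * (x ω e - xb e)) *
         (q j b + ∑ f, Mi j b f * (x ω f - xb f))) ∂P)
        = if i = j then Δτ * (q i a * q j b +
            ∑ e, ∑ f, Mi i a e * Mi j b f * covMat P x x e f) else 0 := by
      intro j
      rw [K4 i j (q i a) (Mi i a) (q j b) (Mi j b)]
      by_cases h : i = j <;> simp [h]
    simp only [this, Finset.sum_ite_eq, Finset.mem_univ, if_true]
  simp only [hval]
  -- final pure algebra
  have hexp : ∀ (N L : Matrix (Fin n) (Fin n) ℝ),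
      (N * covMat P x x * Lᵀ) a b = ∑ e, ∑ f, N a e * L b f * covMat P x x e f := by
    intro N L
    simp only [Matrix.mul_apply, Matrix.transpose_apply, Finset.sum_mul]
    rw [Finset.sum_comm]
    exact Finset.sum_congr rfl fun e _ => Finset.sum_congr rfl fun f _ => by ring
  simp only [Matrix.add_apply, Matrix.smul_apply, Matrix.sum_apply,
    Matrix.vecMulVec_apply, smul_eq_mul, hexp, Finset.mul_sum]
  congr 1
  exact Finset.sum_congr rfl fun i _ => by ring


end Helpers

/-- **One-step covariance propagation under affine feedback** (equation (18b)).
With `ũ = ṽ + K̃ (x − x̄)` and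
`x₊ = A x + F ũ + d + ∑ i (Ã⁽ⁱ⁾ x + F̃⁽ⁱ⁾ ũ + d̃⁽ⁱ⁾) Δw⁽ⁱ⁾`, where `Δw` is
independent of `x`, `E[Δw] = 0`, and `E[Δw Δwᵀ] = Δτ I`, the covariance of `x₊`
is `(A + F K̃) Σ (A + F K̃)ᵀ + Δτ ∑ i ((Ã⁽ⁱ⁾ + F̃⁽ⁱ⁾ K̃) Σ (Ã⁽ⁱ⁾ + F̃⁽ⁱ⁾ K̃)ᵀ + q⁽ⁱ⁾ q⁽ⁱ⁾ᵀ)`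
with `q⁽ⁱ⁾ = Ã⁽ⁱ⁾ x̄ + F̃⁽ⁱ⁾ ṽ + d̃⁽ⁱ⁾`. -/
theorem one_step_covariance_affine_feedback
    {Ω : Type*} [MeasurableSpace Ω] (P : Measure Ω) [IsProbabilityMeasure P]
    {n m d : ℕ}
    (x : Ω → Fin n → ℝ) (Δw : Ω → Fin d → ℝ)
    (hx : MemLp x 2 P) (hw : MemLp Δw 2 P)
    (hindep : ProbabilityTheory.IndepFun Δw x P)
    (hw0 : ∀ i, ∫ ω, Δw ω i ∂P = 0)
    (Δτ : ℝ) (hΔτ : 0 < Δτ)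
    (hw2 : (Matrix.of fun i j => ∫ ω, Δw ω i * Δw ω j ∂P) =
      Δτ • (1 : Matrix (Fin d) (Fin d) ℝ))
    (v : Fin (m + 1) → ℝ) (K : Matrix (Fin (m + 1)) (Fin n) ℝ)
    (A : Matrix (Fin n) (Fin n) ℝ) (F : Matrix (Fin n) (Fin (m + 1)) ℝ)
    (dv : Fin n → ℝ)
    (At : Fin d → Matrix (Fin n) (Fin n) ℝ)
    (Ft : Fin d → Matrix (Fin n) (Fin (m + 1)) ℝ)
    (dt : Fin d → Fin n → ℝ)
    (u : Ω → Fin (m + 1) → ℝ)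
    (hu : ∀ ω, u ω = v + K.mulVec (x ω - meanVec P x))
    (xp : Ω → Fin n → ℝ)
    (hxp : ∀ ω, xp ω =
      A.mulVec (x ω) + F.mulVec (u ω) + dv +
        ∑ i : Fin d, Δw ω i • ((At i).mulVec (x ω) + (Ft i).mulVec (u ω) + dt i)) :
    covMat P xp xp =
      (A + F * K) * covMat P x x * (A + F * K)ᵀ +
        Δτ • ∑ i : Fin d,
          ((At i + Ft i * K) * covMat P x x * (At i + Ft i * K)ᵀ +
            Matrix.vecMulVec
              ((At i).mulVec (meanVec P x) + (Ft i).mulVec v + dt i)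
              ((At i).mulVec (meanVec P x) + (Ft i).mulVec v + dt i)) := by
  classical
  have hw2' : ∀ i j, ∫ ω, Δw ω i * Δw ω j ∂P = if i = j then Δτ else 0 := by
    intro i j
    have h := congrFun (congrFun hw2 i) j
    simpa [Matrix.one_apply, mul_ite, mul_one, mul_zero] using h
  have hxb : ∀ a, (∫ ω, x ω a ∂P) = meanVec P x a := fun a => rfl
  have hxp' : ∀ ω (a : Fin n), xp ω a =
      (((A.mulVec (meanVec P x) + F.mulVec v + dv) a) +
        ∑ e, (A + F * K) a e * (x ω e - meanVec P x e)) +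
      ∑ i, Δw ω i * ((((At i).mulVec (meanVec P x) + (Ft i).mulVec v + dt i) a) +
        ∑ e, (At i + Ft i * K) a e * (x ω e - meanVec P x e)) := by
    intro ω a
    have h2 : ∀ i : Fin d, (At i).mulVec (x ω) + (Ft i).mulVec (u ω) + dt i
        = ((At i).mulVec (meanVec P x) + (Ft i).mulVec v + dt i) +
          (At i + Ft i * K).mulVec (x ω - meanVec P x) := by
      intro i; rw [hu ω]; exact affine_step (At i) (Ft i) (dt i) v K (x ω) (meanVec P x)
    have h1 : A.mulVec (x ω) + F.mulVec (u ω) + dv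
        = (A.mulVec (meanVec P x) + F.mulVec v + dv) +
          (A + F * K).mulVec (x ω - meanVec P x) := by
      rw [hu ω]; exact affine_step A F dv v K (x ω) (meanVec P x)
    rw [hxp ω]
    simp only [h1, h2]
    simp [Matrix.mulVec, dotProduct, Finset.sum_apply, Pi.add_apply, Pi.smul_apply,
      smul_eq_mul, Pi.sub_apply]
    exact Finset.sum_congr rfl fun i _ => by ring
  exact core x Δw hx hw hindep hw0 Δτ hw2' (meanVec P x) hxb
    (A + F * K) (A.mulVec (meanVec P x) + F.mulVec v + dv)
    (fun i => At i + Ft i * K)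
    (fun i => (At i).mulVec (meanVec P x) + (Ft i).mulVec v + dt i)
    xp hxp'
end

section
/- Lipschitz variance bound (Lemma 3): Let h > 0 and let ψ : [0, h] → ℝᵖ be Lipschitz continuous with constant L, i.e., ‖ψ(t) − ψ(s)‖ ≤ L|t − s| for all t, s ∈ [0, h]. Define ψ̄ := (1/h) ∫_0^h ψ(t) dt. Then ∫_0^h ‖ψ(t) − ψ̄‖² dt ≤ (L²/12) h³. -/
open MeasureTheory

/-- **Lipschitz variance bound** (Lemma 3). If `ψ : [0,h] → ℝᵖ` is Lipschitz with
constant `L` and `ψ̄` is its average, then `∫_0^h ‖ψ(t) − ψ̄‖² dt ≤ (L²/12) h³`. -/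
theorem lipschitz_variance_bound
    {p : ℕ} (h L : ℝ) (hh : 0 < h)
    (ψ : ℝ → EuclideanSpace ℝ (Fin p))
    (hlip : ∀ t ∈ Set.Icc (0 : ℝ) h, ∀ s ∈ Set.Icc (0 : ℝ) h,
      ‖ψ t - ψ s‖ ≤ L * |t - s|)
    (ψbar : EuclideanSpace ℝ (Fin p))
    (hψbar : ψbar = h⁻¹ • ∫ t in (0 : ℝ)..h, ψ t) :
    (∫ t in (0 : ℝ)..h, ‖ψ t - ψbar‖ ^ 2) ≤ L ^ 2 / 12 * h ^ 3 := by
  have hL : 0 ≤ L := by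
    have h1 := hlip h ⟨hh.le, le_refl h⟩ 0 ⟨le_refl 0, hh.le⟩
    have h2 : (0:ℝ) ≤ L * |h - 0| := le_trans (norm_nonneg _) h1
    rw [sub_zero, abs_of_pos hh] at h2
    nlinarith
  set c := ψ (h/2) with hc
  set d : EuclideanSpace ℝ (Fin p) := ψbar - c with hd
  have hmem : h/2 ∈ Set.Icc (0:ℝ) h := ⟨by linarith, by linarith⟩
  have hcont : ContinuousOn ψ (Set.uIcc 0 h) := by
    rw [Set.uIcc_of_le hh.le]
    have : LipschitzOnWith (Real.toNNReal L) ψ (Set.Icc 0 h) := by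
      apply LipschitzOnWith.of_dist_le_mul
      intro x hx y hy
      have := hlip x hx y hy
      simpa [dist_eq_norm, Real.dist_eq, Real.coe_toNNReal L hL] using this
    exact this.continuousOn
  have hψ_int : IntervalIntegrable ψ volume 0 h := hcont.intervalIntegrable
  have hψc_int : IntervalIntegrable (fun t => ψ t - c) volume 0 h :=
    hψ_int.sub intervalIntegrable_const
  have hg_int : IntervalIntegrable (fun t => ‖ψ t - c‖ ^ 2) volume 0 h :=
    (((hcont.sub continuousOn_const).norm).pow 2).intervalIntegrable
  have hinner_cont : ContinuousOn (fun t => (inner ℝ d (ψ t - c) : ℝ)) (Set.uIcc 0 h) :=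
    (innerSL ℝ d).continuous.comp_continuousOn (hcont.sub continuousOn_const)
  have hinner_int : IntervalIntegrable (fun t => (inner ℝ d (ψ t - c) : ℝ)) volume 0 h :=
    hinner_cont.intervalIntegrable
  -- total integral of ψ t - c
  have hsum : (∫ t in (0:ℝ)..h, (ψ t - c)) = h • d := by
    rw [intervalIntegral.integral_sub hψ_int intervalIntegrable_const,
      intervalIntegral.integral_const]
    rw [hd, hψbar, smul_sub, smul_smul, mul_inv_cancel₀ hh.ne', one_smul, sub_zero]
  have hinner_val : (∫ t in (0:ℝ)..h, (inner ℝ d (ψ t - c) : ℝ)) = h * ‖d‖ ^ 2 := by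
    have := (innerSL ℝ d).intervalIntegral_comp_comm hψc_int
    rw [hsum] at this
    simp only [innerSL_apply_apply] at this
    rw [real_inner_smul_right, real_inner_self_eq_norm_sq] at this
    exact this
  -- pointwise identity
  have key : ∀ t, ‖ψ t - ψbar‖ ^ 2
      = ‖ψ t - c‖ ^ 2 - 2 * (inner ℝ d (ψ t - c) : ℝ) + ‖d‖ ^ 2 := by
    intro t
    have h1 : ψ t - ψbar = (ψ t - c) - d := by rw [hd]; abel
    rw [h1, norm_sub_sq_real, real_inner_comm]
  have hsplit : (∫ t in (0:ℝ)..h, ‖ψ t - ψbar‖ ^ 2)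
      = (∫ t in (0:ℝ)..h, ‖ψ t - c‖ ^ 2) - h * ‖d‖ ^ 2 := by
    have : (∫ t in (0:ℝ)..h, ‖ψ t - ψbar‖ ^ 2)
        = ∫ t in (0:ℝ)..h, (‖ψ t - c‖ ^ 2 - 2 * (inner ℝ d (ψ t - c) : ℝ) + ‖d‖ ^ 2) := by
      congr 1; funext t; exact key t
    rw [this, intervalIntegral.integral_add (hg_int.sub (hinner_int.const_mul 2))
        intervalIntegrable_const,
      intervalIntegral.integral_sub hg_int (hinner_int.const_mul 2),
      intervalIntegral.integral_const_mul, hinner_val, intervalIntegral.integral_const,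
      sub_zero, smul_eq_mul]
    ring
  have hstep : (∫ t in (0:ℝ)..h, ‖ψ t - ψbar‖ ^ 2) ≤ ∫ t in (0:ℝ)..h, ‖ψ t - c‖ ^ 2 := by
    rw [hsplit]
    have : 0 ≤ h * ‖d‖ ^ 2 := by positivity
    linarith
  have hquad_int : IntervalIntegrable (fun t => L ^ 2 * (t - h/2) ^ 2) volume 0 h := by
    exact (continuous_const.mul ((continuous_id.sub continuous_const).pow 2)).intervalIntegrable _ _
  have hbound : (∫ t in (0:ℝ)..h, ‖ψ t - c‖ ^ 2)
      ≤ ∫ t in (0:ℝ)..h, L ^ 2 * (t - h/2) ^ 2 := by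
    apply intervalIntegral.integral_mono_on hh.le hg_int hquad_int
    intro t ht
    have h1 := hlip t ht (h/2) hmem
    have h2 : ‖ψ t - c‖ ^ 2 ≤ (L * |t - h/2|) ^ 2 := by
      apply pow_le_pow_left₀ (norm_nonneg _) h1
    calc ‖ψ t - c‖ ^ 2 ≤ (L * |t - h/2|) ^ 2 := h2
      _ = L ^ 2 * (t - h/2) ^ 2 := by rw [mul_pow, sq_abs]
  have hval : (∫ t in (0:ℝ)..h, L ^ 2 * (t - h/2) ^ 2) = L ^ 2 / 12 * h ^ 3 := by
    rw [intervalIntegral.integral_const_mul]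
    have : (∫ t in (0:ℝ)..h, (t - h/2) ^ 2)
        = ∫ t in (0 - h/2)..(h - h/2), t ^ 2 := by
      rw [intervalIntegral.integral_comp_sub_right (fun t => t ^ 2) (h/2)]
    rw [this, integral_pow]
    ring
  linarith [hbound, hval, hstep]
end
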